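/- For every n ∈ ℕ and |p| < 1, ∑_{j=0}^∞ ∑_{k=0}^{n+j} (min(n,j,k,n+j-k)+1) · k · |p|^{2j} = n(n+1)/(2(1-|p|²)²) + (n+1)|p|²/(1-|p|²)³. -/

import Mathlib

open Finset

lemma fiber_card (n j k : ℕ) (hk : k ≤ n + j) :
    ((Finset.range (n+1) ×ˢ Finset.range (j+1)).filter (fun ab => ab.1 + ab.2 = k)).card
      = min (min n j) (min k (n + j - k)) + 1 := by
  have him : (Finset.range (n+1) ×ˢ Finset.range (j+1)).filter (fun ab => ab.1 + ab.2 = k)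
      = (Finset.Icc (k - j) (min n k)).image (fun a => (a, k - a)) := by
    ext ⟨a, b⟩
    simp only [mem_filter, mem_product, mem_range, mem_image, Finset.mem_Icc]
    constructor
    · rintro ⟨⟨ha, hb⟩, hab⟩
      exact ⟨a, by omega, by simp; omega⟩
    · rintro ⟨x, hx, hxe⟩
      have h1 : x = a ∧ k - x = b := by
        constructor <;> [exact congrArg Prod.fst hxe; exact congrArg Prod.snd hxe]
      omega
  rw [him, Finset.card_image_of_injective _ (fun x y h => by simpa using congrArg Prod.fst h),
    Nat.card_Icc]
  omega

lemma key (n j : ℕ) :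
    (∑ k ∈ Finset.range (n+j+1), (min (min n j) (min k (n + j - k)) + 1) * k) * 2
      = (n+1) * (j+1) * (n+j) := by
  have h1 : ∑ k ∈ Finset.range (n+j+1), (min (min n j) (min k (n + j - k)) + 1) * k
      = ∑ ab ∈ Finset.range (n+1) ×ˢ Finset.range (j+1), (ab.1 + ab.2) := by
    rw [← Finset.sum_fiberwise_of_maps_to (g := fun ab : ℕ × ℕ => ab.1 + ab.2)
      (t := Finset.range (n+j+1)) (fun ab hab => by
        simp only [mem_product, mem_range] at hab ⊢; omega)]
    refine Finset.sum_congr rfl fun k hk => ?_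
    rw [Finset.sum_congr rfl (fun ab hab => (Finset.mem_filter.1 hab).2),
      Finset.sum_const, smul_eq_mul, fiber_card n j k (by simpa using Nat.lt_succ_iff.1 (mem_range.1 hk))]
  rw [h1, Finset.sum_product]
  have g : ∀ m : ℕ, (∑ i ∈ Finset.range (m+1), i) * 2 = (m+1) * m := by
    intro m; rw [Finset.sum_range_id_mul_two]; simp
  have inner : ∀ a, ∑ b ∈ Finset.range (j+1), (a + b)
      = (j+1) * a + ∑ b ∈ Finset.range (j+1), b := by
    intro a
    rw [Finset.sum_add_distrib, Finset.sum_const, Finset.card_range, smul_eq_mul]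
  simp only [inner]
  rw [Finset.sum_add_distrib, ← Finset.mul_sum, Finset.sum_const, Finset.card_range, smul_eq_mul,
    add_mul, mul_assoc, mul_assoc, g n, g j]
  ring

theorem stmt_12 (n : ℕ) (p : ℂ) (hp : ‖p‖ < 1) :
    HasSum (fun j : ℕ => ∑ k ∈ Finset.range (n + j + 1),
        ((min (min n j) (min k (n + j - k)) + 1 : ℕ) : ℝ) * (k : ℝ) * ‖p‖ ^ (2 * j))
      ((n : ℝ) * ((n : ℝ) + 1) / (2 * (1 - ‖p‖ ^ 2) ^ 2) +
        ((n : ℝ) + 1) * ‖p‖ ^ 2 / (1 - ‖p‖ ^ 2) ^ 3) := by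
  set x : ℝ := ‖p‖ ^ 2 with hxdef
  have hx0 : 0 ≤ x := sq_nonneg _
  have hx1 : x < 1 := by
    have := norm_nonneg p
    nlinarith
  have hxn : ‖x‖ < 1 := by rwa [Real.norm_eq_abs, abs_of_nonneg hx0]
  have h1 : HasSum (fun j : ℕ => ((j + 1).choose 1 : ℝ) * x ^ j) (1 / (1 - x) ^ 2) :=
    hasSum_choose_mul_geometric_of_norm_lt_one 1 hxn
  have h2 : HasSum (fun j : ℕ => ((j + 2).choose 2 : ℝ) * x ^ j) (1 / (1 - x) ^ 3) :=
    hasSum_choose_mul_geometric_of_norm_lt_one 2 hxn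
  have hcomb := ((h1.mul_left ((n : ℝ) * ((n : ℝ) + 1) / 2)).add
    ((h2.sub h1).mul_left ((n : ℝ) + 1)))
  have hne : (1 : ℝ) - x ≠ 0 := by linarith
  convert hcomb using 1
  · rfl
  · funext j
    have hkey := key n j
    have hkeyR : ((∑ k ∈ Finset.range (n+j+1),
        (min (min n j) (min k (n + j - k)) + 1) * k : ℕ) : ℝ) * 2
        = ((n:ℝ)+1) * ((j:ℝ)+1) * ((n:ℝ)+(j:ℝ)) := by
      exact_mod_cast hkey
    have hsum : (∑ k ∈ Finset.range (n + j + 1),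
        ((min (min n j) (min k (n + j - k)) + 1 : ℕ) : ℝ) * (k : ℝ) * ‖p‖ ^ (2 * j))
        = ((n:ℝ)+1) * ((j:ℝ)+1) * ((n:ℝ)+(j:ℝ)) / 2 * x ^ j := by
      rw [pow_mul, ← hxdef, ← Finset.sum_mul]
      congr 1
      rw [show (∑ k ∈ Finset.range (n + j + 1),
          ((min (min n j) (min k (n + j - k)) + 1 : ℕ) : ℝ) * (k : ℝ))
          = ((∑ k ∈ Finset.range (n+j+1),
          (min (min n j) (min k (n + j - k)) + 1) * k : ℕ) : ℝ) by
          rw [Nat.cast_sum]; exact Finset.sum_congr rfl fun k _ => by push_cast; ring]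
      linarith
    rw [hsum, Nat.choose_one_right, Nat.cast_choose_two]
    push_cast
    ring
  · field_simp
    ring
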